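/- For integer a ≥ 7, if ε is a unit of ℤ[ρ] such that all three of its conjugates have absolute value less than a, then ε = 1 or ε = -1. -/

import Mathlib

set_option maxHeartbeats 1000000

private lemma homog_aux (a n d : ℤ) (ha : 7 ≤ a) (hd : d ≠ 0)
    (h : n^3 - a*n^2*d - (a+3)*n*d^2 - d^3 = 0) : False := by
  obtain ⟨g, hg⟩ : ∃ g : ℕ, g = Int.gcd n d := ⟨_, rfl⟩
  have hg0 : 0 < g := hg ▸ Int.gcd_pos_iff.mpr (Or.inr hd)
  have hgz : ((g : ℤ)) ≠ 0 := by exact_mod_cast hg0.ne'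
  obtain ⟨n', hn⟩ : (g : ℤ) ∣ n := hg ▸ Int.gcd_dvd_left n d
  obtain ⟨d', hdd⟩ : (g : ℤ) ∣ d := hg ▸ Int.gcd_dvd_right n d
  have hcop : Int.gcd n' d' = 1 := by
    have h1 : n / (g:ℤ) = n' := by rw [hn]; exact Int.mul_ediv_cancel_left _ hgz
    have h2 : d / (g:ℤ) = d' := by rw [hdd]; exact Int.mul_ediv_cancel_left _ hgz
    rw [← h1, ← h2, hg]; exact Int.gcd_div_gcd_div_gcd (hg ▸ hg0)
  have hd'0 : d' ≠ 0 := by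
    intro h0; apply hd; rw [hdd, h0, mul_zero]
  rw [hn, hdd] at h
  have h' : n'^3 - a*n'^2*d' - (a+3)*n'*d'^2 - d'^3 = 0 := by
    have hexp : (g : ℤ)^3 * (n'^3 - a*n'^2*d' - (a+3)*n'*d'^2 - d'^3) = 0 := by
      linear_combination h
    rcases mul_eq_zero.mp hexp with hc | hc
    · exact absurd (pow_eq_zero_iff (n := 3) (by norm_num) |>.mp hc) hgz
    · exact hc
  have hdvd1 : d' ∣ n'^3 := ⟨a*n'^2 + (a+3)*n'*d' + d'^2, by linear_combination h'⟩
  have hdvd2 : n' ∣ d'^3 := ⟨n'^2 - a*n'*d' - (a+3)*d'^2, by linear_combination -h'⟩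
  have hcopN : Nat.Coprime n'.natAbs d'.natAbs := hcop
  have hd1 : d'.natAbs = 1 := by
    have hdv : d'.natAbs ∣ n'.natAbs ^ 3 := by
      rw [← Int.natAbs_pow]; exact Int.natAbs_dvd_natAbs.mpr hdvd1
    exact Nat.Coprime.eq_one_of_dvd (hcopN.symm.pow_right 3) hdv
  have hn1 : n'.natAbs = 1 := by
    have hdv : n'.natAbs ∣ d'.natAbs ^ 3 := by
      rw [← Int.natAbs_pow]; exact Int.natAbs_dvd_natAbs.mpr hdvd2
    exact Nat.Coprime.eq_one_of_dvd (hcopN.pow_right 3) hdv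
  have hd2 : d' = 1 ∨ d' = -1 := Int.natAbs_eq_iff.mp hd1
  have hn2 : n' = 1 ∨ n' = -1 := Int.natAbs_eq_iff.mp hn1
  rcases hn2 with h2 | h2 <;> rcases hd2 with h3 | h3 <;> rw [h2, h3] at h' <;> ring_nf at h' <;> omega


private lemma cube_one (A : ℤ) (h : A^3 = 1) : A = 1 := by
  nlinarith [sq_nonneg (A-1), sq_nonneg (A+1), sq_nonneg A]

private lemma cube_negone (A : ℤ) (h : A^3 = -1) : A = -1 := by
  have h2 : (-A)^3 = 1 := by linear_combination -h
  have h3 := cube_one (-A) h2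
  omega

private lemma quad1 (a A : ℤ) (ha : 7 ≤ a) (h1 : 2 ≤ A) (h2 : A ≤ a - 2)
    (hq : A^2 - a*A - (a+3) = 0) : False := by
  nlinarith [hq, mul_nonneg (by omega : (0:ℤ) ≤ A - 2) (by omega : (0:ℤ) ≤ a - 2 - A)]

private lemma quad2 (a A : ℤ) (ha : 7 ≤ a) (h1 : 3 ≤ A) (h2 : A ≤ a)
    (hq : A^2 - (a+3)*A + a = 0) : False := by
  nlinarith [hq, mul_nonneg (by omega : (0:ℤ) ≤ A - 3) (by omega : (0:ℤ) ≤ a - A)]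

private lemma cubic_bound (a A : ℤ) (ha : 7 ≤ a) (h0 : 1 ≤ -A) (h1 : 1 ≤ a + A) :
    A^3 + 3*A^2 - 3 + a*(2*A^2 + 3*A - 2) + a^2*A ≤ -(2*a) - 7 := by
  have k1 : (0:ℤ) ≤ (-A - 1) * (a + A - 1) := mul_nonneg (by omega) (by omega)
  have hprod1 : (1:ℤ) ≤ (-A)*(a+A) := by nlinarith [k1]
  have k2 : (0:ℤ) ≤ ((-A)*(a+A) - 1) * (a + A - 1) := mul_nonneg (by linarith) (by omega)
  nlinarith [k1, k2, hprod1, ha, h0, h1]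

private def Mf (a X Y Z : ℤ) : ℤ :=
  Z^3 - 3*Y*Z^2 + Y^3 + 9*X*Z^2 - 3*X*Y*Z - 3*X*Y^2 + 6*X^2*Z + X^3
  + a*(-(Y*Z^2) + Y^2*Z + 4*X*Z^2 - 3*X*Y*Z - X*Y^2 + 2*X^2*Z + X^2*Y)
  + a^2*(X*Z^2 - X*Y*Z + X^2*Z)

theorem units_small_conjugates (a : ℤ) (ha : a ≥ 7) (ρ ρ' ρ'' : ℝ)
    (hρ : ρ ^ 3 - (a : ℝ) * ρ ^ 2 - ((a : ℝ) + 3) * ρ - 1 = 0)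
    (hρ' : ρ' ^ 3 - (a : ℝ) * ρ' ^ 2 - ((a : ℝ) + 3) * ρ' - 1 = 0)
    (hρ'' : ρ'' ^ 3 - (a : ℝ) * ρ'' ^ 2 - ((a : ℝ) + 3) * ρ'' - 1 = 0)
    (hρbig : (a : ℝ) + 1 < ρ) (hρ'1 : (-2 : ℝ) < ρ') (hρ'2 : ρ' < -1)
    (hρ''1 : (-1 : ℝ) < ρ'') (hρ''2 : ρ'' < 0)
    (x y z : ℤ)
    -- ε = x + y ρ + z ρ² is a unit of ℤ[ρ]:
    (hunit : ∃ u v w : ℤ,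
      ((x : ℝ) + y * ρ + z * ρ ^ 2) * ((u : ℝ) + v * ρ + w * ρ ^ 2) = 1)
    (h1 : |(x : ℝ) + y * ρ + z * ρ ^ 2| < a)
    (h2 : |(x : ℝ) + y * ρ' + z * ρ' ^ 2| < a)
    (h3 : |(x : ℝ) + y * ρ'' + z * ρ'' ^ 2| < a) :
    (x : ℝ) + y * ρ + z * ρ ^ 2 = 1 ∨ (x : ℝ) + y * ρ + z * ρ ^ 2 = -1 := by
  have haR : (7 : ℝ) ≤ (a : ℝ) := by exact_mod_cast ha
  have hρ8 : (8 : ℝ) < ρ := by linarith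
  have hρpos : (0 : ℝ) < ρ := by linarith
  have hρ1pos : (0 : ℝ) < ρ + 1 := by linarith
  have hρu : ρ < (a : ℝ) + 2 := by
    by_contra hcon
    push_neg at hcon
    nlinarith [mul_nonneg (mul_nonneg (by linarith : (0:ℝ) ≤ ρ - (a:ℝ) - 2) hρpos.le) hρpos.le,
      mul_nonneg (by linarith : (0:ℝ) ≤ ρ - (a:ℝ) - 2) hρpos.le, sq_nonneg ρ]
  -- divided differences
  have hQ12 : ρ^2 + ρ*ρ' + ρ'^2 - (a:ℝ)*(ρ+ρ') - ((a:ℝ)+3) = 0 := by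
    have hfac : (ρ - ρ') * (ρ^2 + ρ*ρ' + ρ'^2 - (a:ℝ)*(ρ+ρ') - ((a:ℝ)+3)) = 0 := by
      linear_combination hρ - hρ'
    rcases mul_eq_zero.mp hfac with hc | hc
    · exfalso; nlinarith
    · exact hc
  have hQ13 : ρ^2 + ρ*ρ'' + ρ''^2 - (a:ℝ)*(ρ+ρ'') - ((a:ℝ)+3) = 0 := by
    have hfac : (ρ - ρ'') * (ρ^2 + ρ*ρ'' + ρ''^2 - (a:ℝ)*(ρ+ρ'') - ((a:ℝ)+3)) = 0 := by
      linear_combination hρ - hρ''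
    rcases mul_eq_zero.mp hfac with hc | hc
    · exfalso; nlinarith
    · exact hc
  -- Vieta
  have hV1 : ρ + ρ' + ρ'' = (a : ℝ) := by
    have hfac : (ρ' - ρ'') * (ρ + ρ' + ρ'' - (a:ℝ)) = 0 := by
      linear_combination hQ12 - hQ13
    rcases mul_eq_zero.mp hfac with hc | hc
    · exfalso; nlinarith
    · linarith [sub_eq_zero.mp hc]
  have hV3 : ρ * ρ' * ρ'' = 1 := by
    linear_combination (-ρ') * hQ13 + (ρ'*(ρ+ρ''-ρ')) * hV1 + hρ'
  -- identification: ρ''*(ρ+1) = -1 and ρ'*ρ = -(ρ+1)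
  have hkey1 : ((1:ℝ) + ρ'*(ρ+1)) * (1 + ρ''*(ρ+1)) * ρ = 0 := by
    linear_combination (ρ*(ρ+1)) * hV1 + ((ρ+1)^2) * hV3 - hρ
  have hs1 : ρ'' * (ρ+1) = -1 := by
    rcases mul_eq_zero.mp hkey1 with hc | hc
    · rcases mul_eq_zero.mp hc with hc2 | hc2
      · exfalso; nlinarith
      · linarith
    · exfalso; exact hρpos.ne' hc
  have hkey2 : ((ρ+1) + ρ'*ρ) * ((ρ+1) + ρ''*ρ) * ρ = 0 := by
    linear_combination (ρ^2*(ρ+1)) * hV1 + (ρ^2) * hV3 - ρ * hρ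
  have ht1 : ρ' * ρ = -(ρ+1) := by
    rcases mul_eq_zero.mp hkey2 with hc | hc
    · rcases mul_eq_zero.mp hc with hc2 | hc2
      · linarith
      · exfalso; nlinarith
    · exfalso; exact hρpos.ne' hc

  -- t and s
  obtain ⟨t, htdef⟩ : ∃ t : ℝ, t = -1 - ρ' := ⟨_, rfl⟩
  obtain ⟨s, hsdef⟩ : ∃ s : ℝ, s = -ρ'' := ⟨_, rfl⟩
  have ht : ρ * t = 1 := by rw [htdef]; linear_combination -ht1
  have hs : (ρ + 1) * s = 1 := by rw [hsdef]; linear_combination -hs1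
  have ht0 : (0:ℝ) < t := by rw [htdef]; linarith
  have hs0 : (0:ℝ) < s := by rw [hsdef]; linarith
  have ht8 : 8 * t ≤ 1 := by
    have h8 := mul_le_mul_of_nonneg_right hρ8.le ht0.le
    linarith [ht]
  have hs9 : 9 * s ≤ 1 := by
    have h9 := mul_le_mul_of_nonneg_right (by linarith : (9:ℝ) ≤ ρ + 1) hs0.le
    linarith [hs]
  have htms : (t - s) * (ρ + 1) = t := by linear_combination ht - hs
  have hts : s < t := by
    by_contra hc
    push_neg at hc
    nlinarith [mul_nonneg (sub_nonneg.mpr hc) hρ1pos.le]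
  have hρ't : ρ' = -1 - t := by rw [htdef]; ring
  have hρ''s : ρ'' = -s := by rw [hsdef]; ring
  -- he identities
  have he1 : (x:ℝ) + y*ρ + z*ρ^2
      = ((x:ℝ) + ((a:ℝ)+3)*z) + ((y:ℝ) + (a:ℝ)*z)*ρ + (z:ℝ)*t := by
    linear_combination (3*(z:ℝ) - ρ^2*(z:ℝ) + (a:ℝ)*(z:ℝ) + (a:ℝ)*ρ*(z:ℝ)) * ht + (t*(z:ℝ)) * hρ
  have he2 : (x:ℝ) + y*ρ' + z*ρ'^2
      = ((x:ℝ) + ((a:ℝ)+3)*z) - ((y:ℝ) + (a:ℝ)*z) - (z:ℝ) - ((y:ℝ) + (a:ℝ)*z)*t + (z:ℝ)*s := by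
    rw [hρ't]
    linear_combination (3*(z:ℝ) + -3*t*(z:ℝ) + -4*ρ^2*(z:ℝ) + ρ^2*t*(z:ℝ) + ρ^4*(z:ℝ) + (a:ℝ)*(z:ℝ) + -1*(a:ℝ)*t*(z:ℝ) + 4*(a:ℝ)*ρ*(z:ℝ) + -1*(a:ℝ)*ρ*t*(z:ℝ) + -1*(a:ℝ)*ρ^2*(z:ℝ) + -2*(a:ℝ)*ρ^3*(z:ℝ) + (a:ℝ)^2*ρ*(z:ℝ) + (a:ℝ)^2*ρ^2*(z:ℝ)) * ht + (-2*(z:ℝ) + -1*ρ*(z:ℝ) + ρ^2*(z:ℝ) + -1*(a:ℝ)*ρ*(z:ℝ)) * hs + (-1*s*(z:ℝ) + t*(z:ℝ) + -1*t^2*(z:ℝ) + ρ*(z:ℝ) + -1*ρ^2*t*(z:ℝ) + -1*(a:ℝ)*(z:ℝ) + (a:ℝ)*ρ*t*(z:ℝ)) * hρ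
  have he3 : (x:ℝ) + y*ρ'' + z*ρ''^2
      = ((x:ℝ) + ((a:ℝ)+3)*z) - ((y:ℝ) + (a:ℝ)*z)*s - (z:ℝ)*(ρ+1) := by
    rw [hρ''s]
    linear_combination (4*(z:ℝ) + 2*s*(z:ℝ) + 4*ρ*(z:ℝ) + ρ*s*(z:ℝ) + -3*ρ^2*(z:ℝ) + -1*ρ^2*s*(z:ℝ) + -2*ρ^3*(z:ℝ) + ρ^4*(z:ℝ) + 2*(a:ℝ)*(z:ℝ) + 5*(a:ℝ)*ρ*(z:ℝ) + (a:ℝ)*ρ*s*(z:ℝ) + (a:ℝ)*ρ^2*(z:ℝ) + -2*(a:ℝ)*ρ^3*(z:ℝ) + (a:ℝ)^2*ρ*(z:ℝ) + (a:ℝ)^2*ρ^2*(z:ℝ)) * hs + (-2*(z:ℝ) + 2*s*(z:ℝ) + s^2*(z:ℝ) + ρ*(z:ℝ) + ρ*s*(z:ℝ) + -1*ρ^2*s*(z:ℝ) + -1*(a:ℝ)*(z:ℝ) + (a:ℝ)*s*(z:ℝ) + (a:ℝ)*ρ*s*(z:ℝ)) * hρ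
  -- norm identity
  have hG2 : ∀ X Y Z : ℤ, ((X:ℝ) + Y*ρ' + Z*ρ'^2) * ρ^2
      = (X:ℝ)*ρ^2 - (Y:ℝ)*(ρ^2+ρ) + (Z:ℝ)*(ρ+1)^2 := by
    intro X Y Z
    rw [hρ't]
    linear_combination (-(Y:ℝ)*ρ + (Z:ℝ)*(2*ρ + t*ρ + 1)) * ht
  have hG3 : ∀ X Y Z : ℤ, ((X:ℝ) + Y*ρ'' + Z*ρ''^2) * (ρ+1)^2
      = (X:ℝ)*(ρ+1)^2 - (Y:ℝ)*(ρ+1) + (Z:ℝ) := by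
    intro X Y Z
    rw [hρ''s]
    linear_combination (-(Y:ℝ)*(ρ+1) + (Z:ℝ)*(s*(ρ+1) + 1)) * hs
  have norm_id : ∀ X Y Z : ℤ, ((X:ℝ) + Y*ρ + Z*ρ^2) * ((X:ℝ) + Y*ρ' + Z*ρ'^2)
      * ((X:ℝ) + Y*ρ'' + Z*ρ''^2) = (Mf a X Y Z : ℝ) := by
    intro X Y Z
    have h0 : ρ^2*(ρ+1)^2 ≠ 0 := by positivity
    apply mul_right_cancel₀ h0
    have hq : ((X:ℝ)+Y*ρ+Z*ρ^2) * ((X:ℝ)*ρ^2 - (Y:ℝ)*(ρ^2+ρ) + (Z:ℝ)*(ρ+1)^2)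
        * ((X:ℝ)*(ρ+1)^2 - (Y:ℝ)*(ρ+1) + (Z:ℝ)) = (Mf a X Y Z : ℝ) * (ρ^2*(ρ+1)^2) := by
      simp only [Mf]
      push_cast
      linear_combination (-(Y:ℝ)*(Z:ℝ)^2*ρ + -1*(Y:ℝ)*(Z:ℝ)^2*ρ^2 + (Y:ℝ)^2*(Z:ℝ)*ρ + (Y:ℝ)^2*(Z:ℝ)*ρ^2 + -1*(X:ℝ)*(Z:ℝ)^2 + (X:ℝ)*(Z:ℝ)^2*ρ + 4*(X:ℝ)*(Z:ℝ)^2*ρ^2 + (X:ℝ)*(Z:ℝ)^2*ρ^3 + (X:ℝ)*(Y:ℝ)*(Z:ℝ) + -3*(X:ℝ)*(Y:ℝ)*(Z:ℝ)*ρ^2 + -1*(X:ℝ)*(Y:ℝ)*(Z:ℝ)*ρ^3 + -1*(X:ℝ)*(Y:ℝ)^2*ρ + -1*(X:ℝ)*(Y:ℝ)^2*ρ^2 + -1*(X:ℝ)^2*(Z:ℝ) + -1*(X:ℝ)^2*(Z:ℝ)*ρ + 2*(X:ℝ)^2*(Z:ℝ)*ρ^2 + (X:ℝ)^2*(Z:ℝ)*ρ^3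 + (X:ℝ)^2*(Y:ℝ)*ρ + (X:ℝ)^2*(Y:ℝ)*ρ^2 + (a:ℝ)*(X:ℝ)*(Z:ℝ)^2*ρ + (a:ℝ)*(X:ℝ)*(Z:ℝ)^2*ρ^2 + -1*(a:ℝ)*(X:ℝ)*(Y:ℝ)*(Z:ℝ)*ρ + -1*(a:ℝ)*(X:ℝ)*(Y:ℝ)*(Z:ℝ)*ρ^2 + (a:ℝ)*(X:ℝ)^2*(Z:ℝ)*ρ + (a:ℝ)*(X:ℝ)^2*(Z:ℝ)*ρ^2) * hρ
    calc ((X:ℝ) + Y*ρ + Z*ρ^2) * ((X:ℝ) + Y*ρ' + Z*ρ'^2) * ((X:ℝ) + Y*ρ'' + Z*ρ''^2) * (ρ^2*(ρ+1)^2)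
        = ((X:ℝ) + Y*ρ + Z*ρ^2) * (((X:ℝ) + Y*ρ' + Z*ρ'^2) * ρ^2)
          * (((X:ℝ) + Y*ρ'' + Z*ρ''^2) * (ρ+1)^2) := by ring
      _ = (Mf a X Y Z : ℝ) * (ρ^2*(ρ+1)^2) := by rw [hG2 X Y Z, hG3 X Y Z]; linear_combination hq
  -- linear independence of 1, ρ, ρ²
  have indep : ∀ K2 K1 K0 : ℤ, (K2:ℝ)*ρ^2 + (K1:ℝ)*ρ + (K0:ℝ) = 0 → K2 = 0 ∧ K1 = 0 ∧ K0 = 0 := by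
    intro K2 K1 K0 hrel
    obtain ⟨D, hD⟩ : ∃ D:ℤ, D = (a+3)*K2^2 + K0*K2 - a*K1*K2 - K1^2 := ⟨_, rfl⟩
    obtain ⟨E, hE⟩ : ∃ E:ℤ, E = K2^2 - (a*K2+K1)*K0 := ⟨_, rfl⟩
    have hDE : (D:ℝ)*ρ + (E:ℝ) = 0 := by
      rw [hD, hE]; push_cast
      linear_combination ((K2:ℝ)*ρ - ((a:ℝ)*(K2:ℝ)+(K1:ℝ))) * hrel - (K2:ℝ)^2 * hρ
    by_cases hD0 : D = 0
    · have hexprD : (a+3)*K2^2 + K0*K2 - a*K1*K2 - K1^2 = 0 := by rw [← hD]; exact hD0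
      have hE0 : E = 0 := by
        have hc : (E:ℝ) = 0 := by rw [hD0] at hDE; push_cast at hDE; linarith
        exact_mod_cast hc
      have hexprE : K2^2 - (a*K2+K1)*K0 = 0 := by rw [← hE]; exact hE0
      by_cases hK2 : K2 = 0
      · have hK1 : K1 = 0 := by
          have hsq : K1^2 = 0 := by rw [hK2] at hexprD; linear_combination -hexprD
          exact pow_eq_zero_iff (by norm_num) |>.mp hsq
        have hK0 : K0 = 0 := by
          have hc : (K0:ℝ) = 0 := by rw [hK2, hK1] at hrel; push_cast at hrel; linarith
          exact_mod_cast hc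
        exact ⟨hK2, hK1, hK0⟩
      · exfalso
        apply homog_aux a (a*K2+K1) K2 (by exact_mod_cast ha) hK2
        linear_combination (-(a*K2+K1)) * hexprD - K2 * hexprE
    · exfalso
      have hdρ : (D:ℝ)*ρ = -(E:ℝ) := by linarith [hDE]
      have hZ : ((-E)^3 - a*(-E)^2*D - (a+3)*(-E)*D^2 - D^3 : ℤ) = 0 := by
        have hr : (((-E)^3 - a*(-E)^2*D - (a+3)*(-E)*D^2 - D^3 : ℤ) : ℝ) = 0 := by
          push_cast
          linear_combination (D:ℝ)^3 * hρ
            + (3*(D:ℝ)^2 - (E:ℝ)^2 + ρ*(E:ℝ)*(D:ℝ) - ρ^2*(D:ℝ)^2 + (a:ℝ)*(D:ℝ)^2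
               - (a:ℝ)*(E:ℝ)*(D:ℝ) + (a:ℝ)*ρ*(D:ℝ)^2) * hdρ
        exact_mod_cast hr
      exact homog_aux a (-E) D (by exact_mod_cast ha) hD0 hZ
  -- the unit condition at the other embeddings
  obtain ⟨u, v, w, huv⟩ := hunit
  obtain ⟨R0, hR0⟩ : ∃ R0:ℤ, R0 = x*u + y*w + z*v + a*(z*w) - 1 := ⟨_, rfl⟩
  obtain ⟨R1, hR1⟩ : ∃ R1:ℤ, R1 = x*v + y*u + (a+3)*(y*w + z*v) + (a^2+3*a+1)*(z*w) := ⟨_, rfl⟩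
  obtain ⟨R2, hR2⟩ : ∃ R2:ℤ, R2 = x*w + y*v + z*u + a*(y*w+z*v) + (a^2+a+3)*(z*w) := ⟨_, rfl⟩
  have hlin : (R2:ℝ)*ρ^2 + (R1:ℝ)*ρ + (R0:ℝ) = 0 := by
    rw [hR0, hR1, hR2]; push_cast
    linear_combination huv - ((z:ℝ)*(w:ℝ)*ρ + (z:ℝ)*(v:ℝ) + (y:ℝ)*(w:ℝ) + (a:ℝ)*(z:ℝ)*(w:ℝ)) * hρ
  obtain ⟨hR2z, hR1z, hR0z⟩ := indep R2 R1 R0 hlin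
  have hR0r : (x:ℝ)*u + (y:ℝ)*w + (z:ℝ)*v + (a:ℝ)*((z:ℝ)*w) - 1 = 0 := by
    rw [hR0] at hR0z; exact_mod_cast congrArg (Int.cast : ℤ → ℝ) hR0z
  have hR1r : (x:ℝ)*v + (y:ℝ)*u + ((a:ℝ)+3)*((y:ℝ)*w + (z:ℝ)*v) + ((a:ℝ)^2+3*(a:ℝ)+1)*((z:ℝ)*w) = 0 := by
    rw [hR1] at hR1z; exact_mod_cast congrArg (Int.cast : ℤ → ℝ) hR1z
  have hR2r : (x:ℝ)*w + (y:ℝ)*v + (z:ℝ)*u + (a:ℝ)*((y:ℝ)*w+(z:ℝ)*v) + ((a:ℝ)^2+(a:ℝ)+3)*((z:ℝ)*w) = 0 := by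
    rw [hR2] at hR2z; exact_mod_cast congrArg (Int.cast : ℤ → ℝ) hR2z
  have huv2 : ((x:ℝ) + y*ρ' + z*ρ'^2) * ((u:ℝ) + v*ρ' + w*ρ'^2) = 1 := by
    linear_combination ((z:ℝ)*(w:ℝ)*ρ' + (z:ℝ)*(v:ℝ) + (y:ℝ)*(w:ℝ) + (a:ℝ)*(z:ℝ)*(w:ℝ)) * hρ'
      + hR0r + ρ' * hR1r + ρ'^2 * hR2r
  have huv3 : ((x:ℝ) + y*ρ'' + z*ρ''^2) * ((u:ℝ) + v*ρ'' + w*ρ''^2) = 1 := by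
    linear_combination ((z:ℝ)*(w:ℝ)*ρ'' + (z:ℝ)*(v:ℝ) + (y:ℝ)*(w:ℝ) + (a:ℝ)*(z:ℝ)*(w:ℝ)) * hρ''
      + hR0r + ρ'' * hR1r + ρ''^2 * hR2r
  -- the norm of ε is ±1
  have hMM : Mf a x y z * Mf a u v w = 1 := by
    have hr : ((Mf a x y z * Mf a u v w : ℤ) : ℝ) = 1 := by
      push_cast
      rw [← norm_id x y z, ← norm_id u v w]
      linear_combination (((x:ℝ) + y*ρ' + z*ρ'^2) * ((u:ℝ) + v*ρ' + w*ρ'^2)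
          * ((x:ℝ) + y*ρ'' + z*ρ''^2) * ((u:ℝ) + v*ρ'' + w*ρ''^2)) * huv
        + (((x:ℝ) + y*ρ'' + z*ρ''^2) * ((u:ℝ) + v*ρ'' + w*ρ''^2)) * huv2 + huv3
    exact_mod_cast hr
  have hMpm : Mf a x y z = 1 ∨ Mf a x y z = -1 :=
    Int.isUnit_iff.mp (IsUnit.of_mul_eq_one _ hMM)
  -- coordinates
  obtain ⟨A, hA⟩ : ∃ A:ℤ, A = x + (a+3)*z := ⟨_, rfl⟩
  obtain ⟨B, hB⟩ : ∃ B:ℤ, B = y + a*z := ⟨_, rfl⟩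
  obtain ⟨C, hC⟩ : ∃ C:ℤ, C = z := ⟨_, rfl⟩
  have hAr : (A:ℝ) = (x:ℝ) + ((a:ℝ)+3)*(z:ℝ) := by rw [hA]; push_cast; ring
  have hBr : (B:ℝ) = (y:ℝ) + (a:ℝ)*(z:ℝ) := by rw [hB]; push_cast; ring
  have hCr : (C:ℝ) = (z:ℝ) := by rw [hC]
  rw [abs_lt] at h1 h2 h3
  have hU1 : (A:ℝ) + (B:ℝ)*ρ + (C:ℝ)*t < a := by
    rw [hAr, hBr, hCr, ← he1]; exact h1.2
  have hL1 : -(a:ℝ) < (A:ℝ) + (B:ℝ)*ρ + (C:ℝ)*t := by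
    rw [hAr, hBr, hCr, ← he1]; exact h1.1
  have hU2 : (A:ℝ) - (B:ℝ) - (C:ℝ) - (B:ℝ)*t + (C:ℝ)*s < a := by
    rw [hAr, hBr, hCr, ← he2]; exact h2.2
  have hL2 : -(a:ℝ) < (A:ℝ) - (B:ℝ) - (C:ℝ) - (B:ℝ)*t + (C:ℝ)*s := by
    rw [hAr, hBr, hCr, ← he2]; exact h2.1
  have hU3 : (A:ℝ) - (B:ℝ)*s - (C:ℝ)*(ρ+1) < a := by
    rw [hAr, hBr, hCr, ← he3]; exact h3.2
  have hL3 : -(a:ℝ) < (A:ℝ) - (B:ℝ)*s - (C:ℝ)*(ρ+1) := by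
    rw [hAr, hBr, hCr, ← he3]; exact h3.1
  -- norm in A B C coordinates
  have hP : A^3 + B^3 + C^3 - 3*A*B*C - 3*A*B^2 - 3*A^2*C + 6*B*C^2 + 9*B^2*C
      + a*(A*C^2 + A^2*B - A^2*C - A*B^2 - 3*A*B*C + 2*B*C^2 + 4*B^2*C)
      + a^2*(B*C^2 + B^2*C - A*B*C) = 1
    ∨ A^3 + B^3 + C^3 - 3*A*B*C - 3*A*B^2 - 3*A^2*C + 6*B*C^2 + 9*B^2*C
      + a*(A*C^2 + A^2*B - A^2*C - A*B^2 - 3*A*B*C + 2*B*C^2 + 4*B^2*C)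
      + a^2*(B*C^2 + B^2*C - A*B*C) = -1 := by
    have hMfP : Mf a x y z = A^3 + B^3 + C^3 - 3*A*B*C - 3*A*B^2 - 3*A^2*C + 6*B*C^2 + 9*B^2*C
        + a*(A*C^2 + A^2*B - A^2*C - A*B^2 - 3*A*B*C + 2*B*C^2 + 4*B^2*C)
        + a^2*(B*C^2 + B^2*C - A*B*C) := by
      rw [hA, hB, hC]; simp only [Mf]; ring
    rw [← hMfP]; exact hMpm
  -- bounds on B and C
  have hKpos : (0:ℝ) < (ρ+s)*(ρ+1+t) + (1+t-s)*(1+t-s) := by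
    have hh1 : (0:ℝ) < (ρ+s)*(ρ+1+t) :=
      mul_pos (by linarith only [hρpos, hs0]) (by linarith only [hρpos, ht0])
    have hh2 := mul_self_nonneg (1+t-s)
    linarith only [hh1, hh2]
  have hd1u : (B:ℝ)*(ρ+1+t) + (C:ℝ)*(1+t-s) < 2*a := by linarith only [hU1, hL2]
  have hd1l : -(2*(a:ℝ)) < (B:ℝ)*(ρ+1+t) + (C:ℝ)*(1+t-s) := by linarith only [hL1, hU2]
  have hd2u : (B:ℝ)*(1+t-s) - (C:ℝ)*(ρ+s) < 2*a := by linarith only [hU3, hL2]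
  have hd2l : -(2*(a:ℝ)) < (B:ℝ)*(1+t-s) - (C:ℝ)*(ρ+s) := by linarith only [hL3, hU2]
  have hk4 : (0:ℝ) < (ρ - (a:ℝ) - 1) * (ρ + 1) :=
    mul_pos (by linarith only [hρbig]) (by linarith only [hρ1pos])
  have hk5 : (0:ℝ) ≤ (a:ℝ) * (1 - 8*t) :=
    mul_nonneg (by linarith only [haR]) (by linarith only [ht8])
  have hstle : t*s ≤ 1 := by
    have hh1 : t ≤ 1 := by linarith only [ht8, ht0]
    have hh2 : s ≤ 1 := by linarith only [hs9, hs0]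
    calc t*s ≤ 1*1 := mul_le_mul hh1 hh2 hs0.le zero_le_one
    _ = 1 := by norm_num
  have hBle : B ≤ 1 := by
    by_contra hcon
    push_neg at hcon
    have h2B : (2:ℝ) ≤ (B:ℝ) := by exact_mod_cast hcon
    have k1 : (0:ℝ) < (ρ + s) * (2*a - ((B:ℝ)*(ρ+1+t) + (C:ℝ)*(1+t-s))) :=
      mul_pos (by linarith only [hρpos, hs0]) (by linarith only [hd1u])
    have k2 : (0:ℝ) < (1+t-s) * (2*a - ((B:ℝ)*(1+t-s) - (C:ℝ)*(ρ+s))) :=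
      mul_pos (by linarith only [hts, ht0]) (by linarith only [hd2u])
    have k3 : (0:ℝ) ≤ ((B:ℝ) - 2) * ((ρ+s)*(ρ+1+t) + (1+t-s)*(1+t-s)) :=
      mul_nonneg (by linarith only [h2B]) hKpos.le
    linarith only [k1, k2, k3, hk4, hk5, hρbig, haR, ht8, hs9, hstle, hts,
      mul_nonneg hρpos.le ht0.le, mul_nonneg hρpos.le hs0.le, mul_nonneg ht0.le hs0.le,
      sq_nonneg t, sq_nonneg s, ht0.le, hs0.le]
  have hBge : -1 ≤ B := by
    by_contra hcon
    push_neg at hcon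
    have h2B : (B:ℝ) ≤ -2 := by
      have hh : B ≤ -2 := by omega
      exact_mod_cast hh
    have k1 : (0:ℝ) < (ρ + s) * (2*a + ((B:ℝ)*(ρ+1+t) + (C:ℝ)*(1+t-s))) :=
      mul_pos (by linarith only [hρpos, hs0]) (by linarith only [hd1l])
    have k2 : (0:ℝ) < (1+t-s) * (2*a + ((B:ℝ)*(1+t-s) - (C:ℝ)*(ρ+s))) :=
      mul_pos (by linarith only [hts, ht0]) (by linarith only [hd2l])
    have k3 : (0:ℝ) ≤ (-(B:ℝ) - 2) * ((ρ+s)*(ρ+1+t) + (1+t-s)*(1+t-s)) :=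
      mul_nonneg (by linarith only [h2B]) hKpos.le
    linarith only [k1, k2, k3, hk4, hk5, hρbig, haR, ht8, hs9, hstle, hts,
      mul_nonneg hρpos.le ht0.le, mul_nonneg hρpos.le hs0.le, mul_nonneg ht0.le hs0.le,
      sq_nonneg t, sq_nonneg s, ht0.le, hs0.le]
  have hBr1 : -1 ≤ (B:ℝ) := by exact_mod_cast hBge
  have hBr2 : (B:ℝ) ≤ 1 := by exact_mod_cast hBle
  have hCle : C ≤ 1 := by
    by_contra hcon
    push_neg at hcon
    have h2C : (2:ℝ) ≤ (C:ℝ) := by exact_mod_cast hcon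
    have k1 : (0:ℝ) ≤ ((C:ℝ) - 2) * (ρ + s) := mul_nonneg (by linarith only [h2C]) (by linarith only [hρpos, hs0])
    have k2 : (0:ℝ) ≤ (1 - (B:ℝ)) * (1 + t - s) := mul_nonneg (by linarith only [hBr2]) (by linarith only [hts, ht0])
    linarith only [k1, k2, hd2l, hρbig, haR, hs0, ht0, hts, ht8, hs9]
  have hCge : -1 ≤ C := by
    by_contra hcon
    push_neg at hcon
    have h2C : (C:ℝ) ≤ -2 := by
      have hh : C ≤ -2 := by omega
      exact_mod_cast hh
    have k1 : (0:ℝ) ≤ (-(C:ℝ) - 2) * (ρ + s) := mul_nonneg (by linarith only [h2C]) (by linarith only [hρpos, hs0])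
    have k2 : (0:ℝ) ≤ ((B:ℝ) + 1) * (1 + t - s) := mul_nonneg (by linarith only [hBr1]) (by linarith only [hts, ht0])
    linarith only [k1, k2, hd2u, hρbig, haR, hs0, ht0, hts, ht8, hs9]
  -- final expression identity
  have heA : (x:ℝ) + y*ρ + z*ρ^2 = (A:ℝ) + (B:ℝ)*ρ + (C:ℝ)*t := by
    rw [hAr, hBr, hCr]; exact he1
  have haZ : (7:ℤ) ≤ a := ha
  have hBv : B = -1 ∨ B = 0 ∨ B = 1 := by omega
  have hCv : C = -1 ∨ C = 0 ∨ C = 1 := by omega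
  rcases hBv with hBv | hBv | hBv <;> rcases hCv with hCv | hCv | hCv
  · rw [hBv, hCv] at hP hU1 hL1 hU2 hL2 hU3 hL3
    push_cast at hU1 hL1 hU2 hL2 hU3 hL3
    -- B = -1, C = -1
    exfalso
    have hc1 : (1:ℝ) < (A:ℝ) := by linarith only [hL1, hρbig, ht0, haR]
    have hc2 : (A:ℝ) < -2 := by linarith only [hU3, hρbig, hs0, haR]
    linarith only [hc1, hc2]
  · rw [hBv, hCv] at hP hU1 hL1 hU2 hL2 hU3 hL3
    push_cast at hU1 hL1 hU2 hL2 hU3 hL3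
    -- B = -1, C = 0
    exfalso
    have hge : 2 ≤ A := by
      have hc : (1:ℝ) < (A:ℝ) := by linarith only [hL1, hρbig, haR, ht0]
      have hc2 : (1:ℤ) < A := by exact_mod_cast hc
      omega
    have hle : A ≤ a - 2 := by
      have hc : (A:ℝ) < (a:ℝ) - 1 := by linarith only [hU2, ht0]
      have hc2 : A < a - 1 := by exact_mod_cast hc
      omega
    rcases hP with h | h
    · have h' : A * (A^2 - a*A - (a+3)) = 2 := by linear_combination h
      have hdvd : A ∣ 2 := ⟨_, h'.symm⟩
      have hle2 : A ≤ 2 := Int.le_of_dvd (by norm_num) hdvd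
      have hA2 : A = 2 := by omega
      rw [hA2] at h'; ring_nf at h'; omega
    · have h' : A * (A^2 - a*A - (a+3)) = 0 := by linear_combination h
      have hq : A^2 - a*A - (a+3) = 0 := by
        rcases mul_eq_zero.mp h' with h0 | h0
        · omega
        · exact h0
      exact quad1 a A haZ hge hle hq
  · rw [hBv, hCv] at hP hU1 hL1 hU2 hL2 hU3 hL3
    push_cast at hU1 hL1 hU2 hL2 hU3 hL3
    -- B = -1, C = 1
    exfalso
    have hge : 1 ≤ A := by
      have hc : (0:ℝ) < (A:ℝ) := by linarith only [hL1, hρbig, haR, ht8, ht0]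
      have hc2 : (0:ℤ) < A := by exact_mod_cast hc
      omega
    have hle : A ≤ a - 1 := by
      have hc : (A:ℝ) < (a:ℝ) := by linarith only [hU2, ht0, hs0]
      have hc2 : A < a := by exact_mod_cast hc
      omega
    have hcb := cubic_bound a (-A) haZ (by omega) (by omega)
    rcases hP with h | h
    · have h' : A^3 - 3*A^2 + 3 + a*(-(2*A^2) + 3*A + 2) + a^2*A = 1 := by linear_combination h
      linarith only [hcb, h', haZ]
    · have h' : A^3 - 3*A^2 + 3 + a*(-(2*A^2) + 3*A + 2) + a^2*A = -1 := by linear_combination h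
      linarith only [hcb, h', haZ]
  · rw [hBv, hCv] at hP hU1 hL1 hU2 hL2 hU3 hL3
    push_cast at hU1 hL1 hU2 hL2 hU3 hL3
    -- B = 0, C = -1
    exfalso
    have hle : A ≤ -3 := by
      have hc : (A:ℝ) < -2 := by linarith only [hU3, hρbig, haR]
      have hc2 : A < -2 := by exact_mod_cast hc
      omega
    have hge : -a ≤ A := by
      have hc : (-(a:ℝ)) - 1 < (A:ℝ) := by linarith only [hL2, hs0, hs9]
      have hc2 : -a - 1 < A := by exact_mod_cast hc
      omega
    rcases hP with h | h
    · have h' : A * (A^2 + (a+3)*A + a) = 2 := by linear_combination h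
      have hdvd : A ∣ 2 := ⟨_, h'.symm⟩
      have hle2 : -A ≤ 2 := Int.le_of_dvd (by norm_num) ((neg_dvd).mpr hdvd)
      omega
    · have h' : A * (A^2 + (a+3)*A + a) = 0 := by linear_combination h
      have hq : A^2 + (a+3)*A + a = 0 := by
        rcases mul_eq_zero.mp h' with h0 | h0
        · omega
        · exact h0
      exact quad2 a (-A) haZ (by omega) (by omega) (by linear_combination hq)
  · rw [hBv, hCv] at hP hU1 hL1 hU2 hL2 hU3 hL3
    push_cast at hU1 hL1 hU2 hL2 hU3 hL3
    -- B = 0, C = 0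
    have h3' : A^3 = 1 ∨ A^3 = -1 := by
      rcases hP with h | h
      · left; linear_combination h
      · right; linear_combination h
    have hfin : (x:ℝ) + y*ρ + z*ρ^2 = (A:ℝ) := by
      rw [heA, hBv, hCv]; push_cast; ring
    rcases h3' with h | h
    · left
      have hA1 : A = 1 := cube_one A h
      rw [hfin, hA1]; norm_num
    · right
      have hA1 : A = -1 := cube_negone A h
      rw [hfin, hA1]; norm_num
  · rw [hBv, hCv] at hP hU1 hL1 hU2 hL2 hU3 hL3
    push_cast at hU1 hL1 hU2 hL2 hU3 hL3
    -- B = 0, C = 1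
    exfalso
    have hge : 3 ≤ A := by
      have hc : (2:ℝ) < (A:ℝ) := by linarith only [hL3, hρbig, haR]
      have hc2 : (2:ℤ) < A := by exact_mod_cast hc
      omega
    have hle : A ≤ a := by
      have hc : (A:ℝ) < (a:ℝ) + 1 := by linarith only [hU2, hs0]
      have hc2 : A < a + 1 := by exact_mod_cast hc
      omega
    rcases hP with h | h
    · have h' : A * (A^2 - (a+3)*A + a) = 0 := by linear_combination h
      have hq : A^2 - (a+3)*A + a = 0 := by
        rcases mul_eq_zero.mp h' with h0 | h0
        · omega
        · exact h0
      exact quad2 a A haZ hge hle hq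
    · have h' : A * (A^2 - (a+3)*A + a) = -2 := by linear_combination h
      have hdvd : A ∣ 2 := by
        have hdvd0 : A ∣ -2 := ⟨_, h'.symm⟩
        exact (dvd_neg).mp hdvd0
      have hle2 : A ≤ 2 := Int.le_of_dvd (by norm_num) hdvd
      omega
  · rw [hBv, hCv] at hP hU1 hL1 hU2 hL2 hU3 hL3
    push_cast at hU1 hL1 hU2 hL2 hU3 hL3
    -- B = 1, C = -1
    exfalso
    have hle : A ≤ -1 := by
      have hc : (A:ℝ) < 0 := by linarith only [hU1, hρbig, haR, ht8, ht0]
      have hc2 : A < 0 := by exact_mod_cast hc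
      omega
    have hge : -a + 1 ≤ A := by
      have hc : (-(a:ℝ)) < (A:ℝ) := by linarith only [hL2, ht0, hs0]
      have hc2 : -a < A := by exact_mod_cast hc
      omega
    have hcb := cubic_bound a A haZ (by omega) (by omega)
    rcases hP with h | h
    · have h' : A^3 + 3*A^2 - 3 + a*(2*A^2 + 3*A - 2) + a^2*A = 1 := by linear_combination h
      linarith only [hcb, h', haZ]
    · have h' : A^3 + 3*A^2 - 3 + a*(2*A^2 + 3*A - 2) + a^2*A = -1 := by linear_combination h
      linarith only [hcb, h', haZ]
  · rw [hBv, hCv] at hP hU1 hL1 hU2 hL2 hU3 hL3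
    push_cast at hU1 hL1 hU2 hL2 hU3 hL3
    -- B = 1, C = 0
    exfalso
    have hle : A ≤ -2 := by
      have hc : (A:ℝ) < -1 := by linarith only [hU1, hρbig, ht0]
      have hc2 : A < -1 := by exact_mod_cast hc
      omega
    have hge : -a + 2 ≤ A := by
      have hc : (-(a:ℝ)) + 1 < (A:ℝ) := by linarith only [hL2, ht0, ht8]
      have hc2 : -a + 1 < A := by exact_mod_cast hc
      omega
    rcases hP with h | h
    · have h' : A * (A^2 + a*A - (a+3)) = 0 := by linear_combination h
      have hq : A^2 + a*A - (a+3) = 0 := by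
        rcases mul_eq_zero.mp h' with h0 | h0
        · omega
        · exact h0
      exact quad1 a (-A) haZ (by omega) (by omega) (by linear_combination hq)
    · have h' : A * (A^2 + a*A - (a+3)) = -2 := by linear_combination h
      have hdvd : A ∣ 2 := by
        have hdvd0 : A ∣ -2 := ⟨_, h'.symm⟩
        exact (dvd_neg).mp hdvd0
      have hle2 : -A ≤ 2 := Int.le_of_dvd (by norm_num) ((neg_dvd).mpr hdvd)
      have hA2 : A = -2 := by omega
      rw [hA2] at h'; ring_nf at h'; omega
  · rw [hBv, hCv] at hP hU1 hL1 hU2 hL2 hU3 hL3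
    push_cast at hU1 hL1 hU2 hL2 hU3 hL3
    -- B = 1, C = 1
    exfalso
    have hc1 : (A:ℝ) < -1 := by linarith only [hU1, hρbig, ht0]
    have hc2 : (2:ℝ) < (A:ℝ) := by linarith only [hL3, hρbig, hs0, haR]
    linarith only [hc1, hc2]
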